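/- If ⟨−⟩ : C → O is a contraction on a half-balanced braided monoidal category C, then for any objects X, Y one has ⟨θ_X ⊗ θ_Y^{-1}⟩ = id_{⟨X,Y⟩} and ⟨(θ_X^2 ⊗ id_Y) β_{Y,X} β_{X,Y}⟩ = id_{⟨X,Y⟩}. -/

import Mathlib

open CategoryTheory MonoidalCategory

universe u v

variable (C : Type u) [Category.{v} C] [MonoidalCategory C] [BraidedCategory C]

/-- A half-balanced structure on a braided monoidal category: an involutive autofunctor
`*` which anti-commutes with the tensor product and is compatible with the braiding,
together with a natural family of isomorphisms `a_X : X ≅ X*` satisfying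
`a_{X⊗Y} = (a_Y ⊗ a_X) ∘ β_{X,Y}`. -/
structure HalfBalanced where
  star : C → C
  starMap : ∀ {X Y : C}, (X ⟶ Y) → (star X ⟶ star Y)
  invol : ∀ X : C, star (star X) = X
  star_tensor : ∀ X Y : C, star (X ⊗ Y) = star Y ⊗ star X
  starMap_id : ∀ X : C, starMap (𝟙 X) = 𝟙 (star X)
  starMap_comp : ∀ {X Y Z : C} (f : X ⟶ Y) (g : Y ⟶ Z),
    starMap (f ≫ g) = starMap f ≫ starMap g
  starMap_invol : ∀ {X Y : C} (f : X ⟶ Y),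
    starMap (starMap f) = eqToHom (invol X) ≫ f ≫ eqToHom (invol Y).symm
  starMap_tensor : ∀ {X X' Y Y' : C} (f : X ⟶ X') (g : Y ⟶ Y'),
    starMap (f ⊗ₘ g) =
      eqToHom (star_tensor X Y) ≫ (starMap g ⊗ₘ starMap f) ≫ eqToHom (star_tensor X' Y').symm
  star_braiding : ∀ X Y : C,
    starMap (β_ X Y).hom =
      eqToHom (star_tensor X Y) ≫ (β_ (star Y) (star X)).hom ≫ eqToHom (star_tensor Y X).symm
  a : ∀ X : C, X ≅ star X
  a_natural : ∀ {X Y : C} (f : X ⟶ Y), f ≫ (a Y).hom = (a X).hom ≫ starMap f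
  a_tensor : ∀ X Y : C,
    (a (X ⊗ Y)).hom =
      (β_ X Y).hom ≫ ((a Y).hom ⊗ₘ (a X).hom) ≫ eqToHom (star_tensor X Y).symm

variable {C}

/-- The balance induced by a half-balanced structure: `θ_X := a_{X*} ∘ a_X`. -/
def HalfBalanced.θ (hb : HalfBalanced C) (X : C) : X ≅ X :=
  hb.a X ≪≫ hb.a (hb.star X) ≪≫ eqToIso (hb.invol X)

universe w x

variable {O : Type w} [Category.{x} O]

/-- A (balanced) contraction on `C` relative to the balance induced by a half-balanced
structure: a functor `⟨-⟩ : C ⥤ O` with `⟨Y⊗X⟩ = ⟨X⊗Y⟩`, `⟨(θ_Y ⊗ id_X) β_{X,Y}⟩ = id`,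
`⟨(X⊗Y)⊗Z⟩ = ⟨X⊗(Y⊗Z)⟩` and `⟨a_{X,Y,Z}⟩ = id`. -/
structure IsBalancedContraction (hb : HalfBalanced C) (F : C ⥤ O) : Prop where
  obj_swap : ∀ X Y : C, F.obj (X ⊗ Y) = F.obj (Y ⊗ X)
  map_braid : ∀ X Y : C,
    F.map ((β_ X Y).hom ≫ ((hb.θ Y).hom ⊗ₘ 𝟙 X)) = eqToHom (obj_swap X Y)
  obj_assoc : ∀ X Y Z : C, F.obj ((X ⊗ Y) ⊗ Z) = F.obj (X ⊗ (Y ⊗ Z))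
  map_assoc : ∀ X Y Z : C, F.map (α_ X Y Z).hom = eqToHom (obj_assoc X Y Z)

/-- A contraction on a half-balanced braided monoidal category: a balanced contraction
which moreover satisfies `⟨X*⟩ = ⟨X⟩` and `⟨a_X⟩ = id_{⟨X⟩}`. -/
structure IsHalfBalancedContraction (hb : HalfBalanced C) (F : C ⥤ O)
    extends IsBalancedContraction hb F : Prop where
  obj_star : ∀ X : C, F.obj (hb.star X) = F.obj X
  map_a : ∀ X : C, F.map (hb.a X).hom = eqToHom (obj_star X).symm


section Aux

variable {O : Type w} [Category.{x} O]

lemma hbc_starMap_eqToHom (hb : HalfBalanced C) {A B : C} (h : A = B) :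
    hb.starMap (eqToHom h) = eqToHom (congrArg hb.star h) := by
  subst h; simp [hb.starMap_id]

lemma hbc_map_a_inv (hb : HalfBalanced C) (F : C ⥤ O)
    (hF : IsHalfBalancedContraction hb F) (Z : C) :
    F.map (hb.a Z).inv = eqToHom (hF.obj_star Z) := by
  have h : F.map (hb.a Z).hom ≫ F.map (hb.a Z).inv = 𝟙 _ := (hb.a Z).map_hom_inv_id F
  rw [hF.map_a] at h
  have h2 := congrArg (fun g => eqToHom (hF.obj_star Z) ≫ g) h
  simpa using h2

lemma hbc_map_starMap (hb : HalfBalanced C) (F : C ⥤ O)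
    (hF : IsHalfBalancedContraction hb F) {A B : C} (f : A ⟶ B) :
    F.map (hb.starMap f) =
      eqToHom (hF.obj_star A) ≫ F.map f ≫ eqToHom (hF.obj_star B).symm := by
  have h : hb.starMap f = (hb.a A).inv ≫ f ≫ (hb.a B).hom := by
    rw [hb.a_natural f, Iso.inv_hom_id_assoc]
  rw [h, F.map_comp, F.map_comp, hbc_map_a_inv hb F hF, hF.map_a]

lemma hbc_map_braid_star (hb : HalfBalanced C) (F : C ⥤ O)
    (hF : IsHalfBalancedContraction hb F) (X Y : C) :
    F.map (β_ (hb.star Y) (hb.star X)).hom =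
      eqToHom ((congrArg F.obj (hb.star_tensor X Y)).symm.trans (hF.obj_star (X ⊗ Y))) ≫
        F.map (β_ X Y).hom ≫
          eqToHom (((congrArg F.obj (hb.star_tensor Y X)).symm.trans
            (hF.obj_star (Y ⊗ X))).symm) := by
  have h := hb.star_braiding X Y
  have h2 : (β_ (hb.star Y) (hb.star X)).hom =
      eqToHom (hb.star_tensor X Y).symm ≫ hb.starMap (β_ X Y).hom ≫
        eqToHom (hb.star_tensor Y X) := by
    rw [h]; simp
  rw [h2, F.map_comp, F.map_comp, hbc_map_starMap hb F hF, eqToHom_map, eqToHom_map]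
  simp

lemma hbc_map_a_tensor (hb : HalfBalanced C) (F : C ⥤ O)
    (hF : IsHalfBalancedContraction hb F) (X Y : C) :
    F.map ((hb.a Y).hom ⊗ₘ (hb.a X).hom) =
      F.map (β_ X Y).inv ≫
        eqToHom ((hF.obj_star (X ⊗ Y)).symm.trans
          (congrArg F.obj (hb.star_tensor X Y))) := by
  have h : ((hb.a Y).hom ⊗ₘ (hb.a X).hom) =
      (β_ X Y).inv ≫ (hb.a (X ⊗ Y)).hom ≫ eqToHom (hb.star_tensor X Y) := by
    rw [hb.a_tensor]; simp
  rw [h, F.map_comp, F.map_comp, hF.map_a, eqToHom_map, eqToHom_trans]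

lemma hbc_a_theta (hb : HalfBalanced C) (X : C) :
    (hb.a X).hom ≫ (hb.θ (hb.star X)).hom = (hb.θ X).hom ≫ (hb.a X).hom := by
  have h := hb.a_natural (eqToHom (hb.invol X))
  rw [hbc_starMap_eqToHom] at h
  have h' : (hb.a (hb.star (hb.star X))).hom ≫ eqToHom (hb.invol (hb.star X)) =
      eqToHom (hb.invol X) ≫ (hb.a X).hom := h.symm
  simp only [HalfBalanced.θ, Iso.trans_hom, eqToIso.hom, Category.assoc]
  rw [h']

lemma hbc_conj (hb : HalfBalanced C) (X Y : C) :
    ((hb.a X).hom ⊗ₘ (hb.a Y).hom) ≫ ((hb.θ (hb.star X)).hom ⊗ₘ 𝟙 (hb.star Y)) =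
      ((hb.θ X).hom ⊗ₘ 𝟙 Y) ≫ ((hb.a X).hom ⊗ₘ (hb.a Y).hom) := by
  rw [tensorHom_comp_tensorHom, tensorHom_comp_tensorHom, hbc_a_theta, Category.comp_id, Category.id_comp]

lemma hbc_map_theta_id (hb : HalfBalanced C) (F : C ⥤ O)
    (hF : IsHalfBalancedContraction hb F) (X Y : C) :
    F.map ((hb.θ X).hom ⊗ₘ 𝟙 Y) = F.map (β_ Y X).inv ≫ eqToHom (hF.obj_swap Y X) := by
  have h := hF.map_braid Y X
  rw [F.map_comp] at h
  rw [← h]; simp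

lemma hbc_braid_symm (hb : HalfBalanced C) (F : C ⥤ O)
    (hF : IsHalfBalancedContraction hb F) (X Y : C) :
    F.map (β_ X Y).hom =
      eqToHom (hF.obj_swap X Y) ≫ F.map (β_ Y X).hom ≫ eqToHom (hF.obj_swap X Y) := by
  have hc : F.map ((hb.a X).hom ⊗ₘ (hb.a Y).hom) ≫
        F.map ((hb.θ (hb.star X)).hom ⊗ₘ 𝟙 (hb.star Y)) =
      F.map ((hb.θ X).hom ⊗ₘ 𝟙 Y) ≫ F.map ((hb.a X).hom ⊗ₘ (hb.a Y).hom) := by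
    rw [← F.map_comp, ← F.map_comp, hbc_conj]
  rw [hbc_map_a_tensor hb F hF Y X, hbc_map_theta_id hb F hF X Y] at hc
  simp only [Category.assoc] at hc
  have hTs : F.map ((hb.θ (hb.star X)).hom ⊗ₘ 𝟙 (hb.star Y)) =
      eqToHom ((hF.obj_star (Y ⊗ X)).symm.trans
          (congrArg F.obj (hb.star_tensor Y X))).symm ≫
        F.map (β_ Y X).hom ≫ F.map (β_ Y X).inv ≫ eqToHom (hF.obj_swap Y X) ≫
          F.map (β_ Y X).inv ≫
            eqToHom ((hF.obj_star (Y ⊗ X)).symm.trans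
              (congrArg F.obj (hb.star_tensor Y X))) := by
    have h2 := congrArg (fun g =>
      eqToHom ((hF.obj_star (Y ⊗ X)).symm.trans
          (congrArg F.obj (hb.star_tensor Y X))).symm ≫
        F.map (β_ Y X).hom ≫ g) hc
    simpa only [Category.assoc, Iso.map_hom_inv_id_assoc, eqToHom_trans_assoc,
      eqToHom_refl, Category.id_comp] using h2
  have hb4 := hF.map_braid (hb.star Y) (hb.star X)
  rw [F.map_comp, hbc_map_braid_star hb F hF X Y, hTs] at hb4
  simp only [Category.assoc, Iso.map_hom_inv_id_assoc, eqToHom_trans_assoc,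
    eqToHom_refl, Category.id_comp] at hb4
  have h5 := congrArg (fun g =>
    eqToHom ((congrArg F.obj (hb.star_tensor X Y)).symm.trans
        (hF.obj_star (X ⊗ Y))).symm ≫ g ≫
      eqToHom ((hF.obj_star (Y ⊗ X)).symm.trans
          (congrArg F.obj (hb.star_tensor Y X))).symm ≫
        F.map (β_ Y X).hom ≫ eqToHom (hF.obj_swap Y X).symm) hb4
  simp only [Category.assoc, eqToHom_trans_assoc, eqToHom_refl, Category.id_comp,
    Iso.map_inv_hom_id_assoc, eqToHom_trans, Category.comp_id] at h5
  exact h5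

end Aux

/-- If `⟨-⟩ : C ⥤ O` is a contraction on a half-balanced braided monoidal category, then
for any objects `X, Y` one has `⟨θ_X ⊗ θ_Y⁻¹⟩ = id_{⟨X,Y⟩}` and
`⟨(θ_X² ⊗ id_Y) β_{Y,X} β_{X,Y}⟩ = id_{⟨X,Y⟩}`. -/
theorem halfBalancedContraction_theta (hb : HalfBalanced C) (F : C ⥤ O)
    (hF : IsHalfBalancedContraction hb F) (X Y : C) :
    F.map ((hb.θ X).hom ⊗ₘ (hb.θ Y).inv) = 𝟙 (F.obj (X ⊗ Y)) ∧
    F.map ((β_ X Y).hom ≫ (β_ Y X).hom ≫ (((hb.θ X).hom ≫ (hb.θ X).hom) ⊗ₘ 𝟙 Y)) =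
      𝟙 (F.obj (X ⊗ Y)) := by
  have hD := hbc_braid_symm hb F hF X Y
  have hb5 := hF.map_braid Y X
  rw [F.map_comp] at hb5
  have hT := hbc_map_theta_id hb F hF X Y
  constructor
  · have h1exp : (hb.θ X).hom ⊗ₘ (hb.θ Y).inv =
        ((hb.θ X).hom ⊗ₘ 𝟙 Y) ≫ (𝟙 X ⊗ₘ (hb.θ Y).inv) := by
      rw [tensorHom_comp_tensorHom, Category.comp_id, Category.id_comp]
    have hnat : (𝟙 X ⊗ₘ (hb.θ Y).inv) =
        (β_ Y X).inv ≫ (((hb.θ Y).inv ⊗ₘ 𝟙 X) ≫ (β_ Y X).hom) := by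
      rw [BraidedCategory.braiding_naturality, Iso.inv_hom_id_assoc]
    have hinv : F.map ((hb.θ Y).inv ⊗ₘ 𝟙 X) =
        eqToHom (hF.obj_swap X Y).symm ≫ F.map (β_ X Y).hom := by
      have h := hF.map_braid X Y
      rw [F.map_comp] at h
      have hcomp : F.map ((hb.θ Y).hom ⊗ₘ 𝟙 X) ≫ F.map ((hb.θ Y).inv ⊗ₘ 𝟙 X) = 𝟙 _ := by
        rw [← F.map_comp, tensorHom_comp_tensorHom, Iso.hom_inv_id, Category.comp_id,
          id_tensorHom_id, F.map_id]
      calc F.map ((hb.θ Y).inv ⊗ₘ 𝟙 X)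
          = (eqToHom (hF.obj_swap X Y).symm ≫
              (F.map (β_ X Y).hom ≫ F.map ((hb.θ Y).hom ⊗ₘ 𝟙 X))) ≫
            F.map ((hb.θ Y).inv ⊗ₘ 𝟙 X) := by rw [h]; simp
        _ = eqToHom (hF.obj_swap X Y).symm ≫ F.map (β_ X Y).hom := by
            simp only [Category.assoc]; rw [hcomp]; rw [Category.comp_id]
    rw [h1exp, F.map_comp, hnat, F.map_comp, F.map_comp, hinv, hT, hD]
    simp only [Category.assoc, eqToHom_trans_assoc, eqToHom_refl, Category.id_comp,
      Iso.map_inv_hom_id, Iso.map_inv_hom_id_assoc, eqToHom_trans, Category.comp_id]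
  · have h2exp : ((hb.θ X).hom ≫ (hb.θ X).hom) ⊗ₘ 𝟙 Y =
        ((hb.θ X).hom ⊗ₘ 𝟙 Y) ≫ ((hb.θ X).hom ⊗ₘ 𝟙 Y) := by
      rw [tensorHom_comp_tensorHom, Category.comp_id]
    rw [h2exp, F.map_comp, F.map_comp, F.map_comp, hD, hT]
    simp only [Category.assoc, eqToHom_trans_assoc, eqToHom_refl, Category.id_comp,
      Iso.map_hom_inv_id_assoc, Iso.map_inv_hom_id_assoc, Iso.map_hom_inv_id,
      Iso.map_inv_hom_id, eqToHom_trans, Category.comp_id]
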